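/- arXiv:1509.06288 — 3 statements merged into one kernel-verified Lean document; each statement's English description precedes it below -/
import Mathlib

section
/- The class of x^2 y^3 in the Milnor algebra C[x,y,z]/(∂f) of f = x^5 + y^4 z + x^4 y is a nonzero element annihilated by the maximal ideal (x,y,z): each of x·x^2y^3, y·x^2y^3, z·x^2y^3 lies in the Jacobian ideal while x^2y^3 does not. -/
open MvPolynomial

theorem stmt3 (x y z f : MvPolynomial (Fin 3) ℂ)
    (hx : x = X 0) (hy : y = X 1) (hz : z = X 2)
    (hf : f = x ^ 5 + y ^ 4 * z + x ^ 4 * y) :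
    x * (x ^ 2 * y ^ 3) ∈ Ideal.span {pderiv 0 f, pderiv 1 f, pderiv 2 f} ∧
    y * (x ^ 2 * y ^ 3) ∈ Ideal.span {pderiv 0 f, pderiv 1 f, pderiv 2 f} ∧
    z * (x ^ 2 * y ^ 3) ∈ Ideal.span {pderiv 0 f, pderiv 1 f, pderiv 2 f} ∧
    x ^ 2 * y ^ 3 ∉ Ideal.span {pderiv 0 f, pderiv 1 f, pderiv 2 f} := by
  have hd0 : pderiv 0 f = 5 * x ^ 4 + 4 * x ^ 3 * y := by
    subst hf hx hy hz
    simp [Finsupp.single_apply]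
    ring
  have hd1 : pderiv 1 f = 4 * y ^ 3 * z + x ^ 4 := by
    subst hf hx hy hz
    simp [Finsupp.single_apply]
    ring
  have hd2 : pderiv 2 f = y ^ 4 := by
    subst hf hx hy hz
    simp [Finsupp.single_apply]
  set I : Ideal (MvPolynomial (Fin 3) ℂ) :=
    Ideal.span {pderiv 0 f, pderiv 1 f, pderiv 2 f} with hI
  have h0 : pderiv 0 f ∈ I := Ideal.subset_span (by simp)
  have h1 : pderiv 1 f ∈ I := Ideal.subset_span (by simp)
  have h2 : pderiv 2 f ∈ I := Ideal.subset_span (by simp)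
  have e4 : (4 : MvPolynomial (Fin 3) ℂ) = C (4 : ℂ) := (map_ofNat _ 4).symm
  have e100 : (100 : MvPolynomial (Fin 3) ℂ) = C (100 : ℂ) := (map_ofNat _ 100).symm
  have cancel4 : ∀ w : MvPolynomial (Fin 3) ℂ, C ((4 : ℂ)⁻¹) * (C (4 : ℂ) * w) = w := by
    intro w; rw [← mul_assoc, ← C_mul]; norm_num
  have cancel100 : ∀ w : MvPolynomial (Fin 3) ℂ, C ((100 : ℂ)⁻¹) * (C (100 : ℂ) * w) = w := by
    intro w; rw [← mul_assoc, ← C_mul]; norm_num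
  refine ⟨?_, ?_, ?_, ?_⟩
  · -- x * (x^2*y^3)
    have key : (4 : MvPolynomial (Fin 3) ℂ) * (x * (x ^ 2 * y ^ 3)) ∈ I := by
      have heq : (4 : MvPolynomial (Fin 3) ℂ) * (x * (x ^ 2 * y ^ 3)) =
          y ^ 2 * pderiv 0 f + (-5 * y ^ 2) * pderiv 1 f + (20 * y * z) * pderiv 2 f := by
        rw [hd0, hd1, hd2]; ring
      rw [heq]
      exact add_mem (add_mem (I.mul_mem_left _ h0) (I.mul_mem_left _ h1)) (I.mul_mem_left _ h2)
    have : x * (x ^ 2 * y ^ 3) =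
        C ((4 : ℂ)⁻¹) * ((4 : MvPolynomial (Fin 3) ℂ) * (x * (x ^ 2 * y ^ 3))) := by
      rw [e4, cancel4]
    rw [this]
    exact I.mul_mem_left _ key
  · -- y * (x^2*y^3)
    have heq : y * (x ^ 2 * y ^ 3) = x ^ 2 * pderiv 2 f := by rw [hd2]; ring
    rw [heq]
    exact I.mul_mem_left _ h2
  · -- z * (x^2*y^3)
    have key : (100 : MvPolynomial (Fin 3) ℂ) * (z * (x ^ 2 * y ^ 3)) ∈ I := by
      have heq : (100 : MvPolynomial (Fin 3) ℂ) * (z * (x ^ 2 * y ^ 3)) =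
          (-5 * x ^ 2 + 4 * x * y) * pderiv 0 f + (25 * x ^ 2 - 16 * y ^ 2) * pderiv 1 f
            + (64 * y * z) * pderiv 2 f := by
        rw [hd0, hd1, hd2]; ring
      rw [heq]
      exact add_mem (add_mem (I.mul_mem_left _ h0) (I.mul_mem_left _ h1)) (I.mul_mem_left _ h2)
    have : z * (x ^ 2 * y ^ 3) =
        C ((100 : ℂ)⁻¹) * ((100 : MvPolynomial (Fin 3) ℂ) * (z * (x ^ 2 * y ^ 3))) := by
      rw [e100, cancel100]
    rw [this]
    exact I.mul_mem_left _ key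
  · -- non-membership
    intro hmem
    rw [hI, Ideal.mem_span_insert] at hmem
    obtain ⟨u, w, hw, he⟩ := hmem
    rw [Ideal.mem_span_insert] at hw
    obtain ⟨v, w2, hw2, he2⟩ := hw
    rw [Ideal.mem_span_singleton'] at hw2
    obtain ⟨t, ht⟩ := hw2
    subst he2
    rw [← ht] at he
    -- monomial forms of the generators
    have m0 : pderiv 0 f = monomial (Finsupp.single 0 4) 5
        + monomial (Finsupp.single 0 3 + Finsupp.single 1 1) 4 := by
      rw [hd0, hx, hy]
      simp [monomial_eq, Finsupp.prod_add_index, Finsupp.prod_single_index, map_ofNat, Fin.prod_univ_three, Finsupp.single_apply]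
      ring
    have m1 : pderiv 1 f = monomial (Finsupp.single 1 3 + Finsupp.single 2 1) 4
        + monomial (Finsupp.single 0 4) 1 := by
      rw [hd1, hx, hy, hz]
      simp [monomial_eq, Finsupp.prod_add_index, Finsupp.prod_single_index, map_ofNat, Fin.prod_univ_three, Finsupp.single_apply]
      ring
    have m2 : pderiv 2 f = monomial (Finsupp.single 1 4) 1 := by
      rw [hd2, hy]
      simp [monomial_eq, Finsupp.prod_single_index]
    have mt : x ^ 2 * y ^ 3 = monomial (Finsupp.single 0 2 + Finsupp.single 1 3) 1 := by
      rw [hx, hy]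
      simp [X_pow_eq_monomial, monomial_mul]
    set E : Fin 3 →₀ ℕ := Finsupp.single 0 2 + Finsupp.single 1 3 with hE
    have n1 : ¬ ((Finsupp.single 0 4 : Fin 3 →₀ ℕ) ≤ E) := by
      intro h; have := h 0; simp [hE, Finsupp.single_apply] at this
    have n2 : ¬ ((Finsupp.single 0 3 + Finsupp.single 1 1 : Fin 3 →₀ ℕ) ≤ E) := by
      intro h; have := h 0; simp [hE, Finsupp.single_apply] at this
    have n3 : ¬ ((Finsupp.single 1 3 + Finsupp.single 2 1 : Fin 3 →₀ ℕ) ≤ E) := by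
      intro h; have := h 2; simp [hE, Finsupp.single_apply] at this
    have n4 : ¬ ((Finsupp.single 1 4 : Fin 3 →₀ ℕ) ≤ E) := by
      intro h; have := h 1; simp [hE, Finsupp.single_apply] at this
    have hco := congrArg (coeff E) he
    rw [mt, m0, m1, m2] at hco
    simp [mul_add, coeff_add, coeff_mul_monomial', n1, n2, n3, n4, coeff_monomial] at hco
end

section
/- The plane curve h = x^5 + x^4 y + y^4 has Tjurina number τ = 11 at the origin, i.e., dim_C C[[x,y]]/(h, h_x, h_y) = 11. -/
open MvPowerSeries

namespace TjurinaAux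

open Finsupp

noncomputable section

abbrev RR := MvPowerSeries (Fin 2) ℂ

def ee (a b : ℕ) : Fin 2 →₀ ℕ := Finsupp.single 0 a + Finsupp.single 1 b

lemma ee_apply0 (a b : ℕ) : ee a b 0 = a := by simp [ee]
lemma ee_apply1 (a b : ℕ) : ee a b 1 = b := by simp [ee, Finsupp.single_apply]

lemma eq_ee (e : Fin 2 →₀ ℕ) : e = ee (e 0) (e 1) := by
  ext i
  fin_cases i
  · simp [ee_apply0]
  · simpa using (ee_apply1 (e 0) (e 1)).symm

lemma ee_le {a b c d : ℕ} : ee a b ≤ ee c d ↔ a ≤ c ∧ b ≤ d := by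
  constructor
  · intro hle
    exact ⟨by simpa [ee_apply0] using hle 0, by simpa [ee_apply1] using hle 1⟩
  · rintro ⟨h1, h2⟩ i
    fin_cases i
    · simpa [ee_apply0] using h1
    · simpa [ee_apply1] using h2

lemma ee_sub {a b c d : ℕ} : ee a b - ee c d = ee (a - c) (b - d) := by
  ext i
  fin_cases i
  · simp [Finsupp.tsub_apply, ee_apply0]
  · simpa [Finsupp.tsub_apply] using by simp [ee_apply1]

lemma ee_inj {a b c d : ℕ} : ee a b = ee c d ↔ a = c ∧ b = d := by
  constructor
  · intro hle
    constructor
    · rw [← ee_apply0 a b, hle, ee_apply0]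
    · rw [← ee_apply1 a b, hle, ee_apply1]
  · rintro ⟨rfl, rfl⟩; rfl

lemma coeff_congr {a b c d : ℕ} (h1 : a = c) (h2 : b = d) (t : RR) :
    (coeff (ee a b)) t = (coeff (ee c d)) t := by subst h1; subst h2; rfl

def mm (a b : ℕ) : RR := monomial (ee a b) 1

lemma X0_pow (n : ℕ) : (X 0 : RR) ^ n = mm n 0 := by
  rw [X_pow_eq, mm]; congr 1; simp [ee]

lemma X1_pow (n : ℕ) : (X 1 : RR) ^ n = mm 0 n := by
  rw [X_pow_eq, mm]; congr 1; simp [ee]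

lemma mm_mul (a b c d : ℕ) : mm a b * mm c d = mm (a+c) (b+d) := by
  rw [mm, mm, mm, monomial_mul_monomial, one_mul]
  congr 1
  simp only [ee, Finsupp.single_add]; abel

lemma coeff_mul_mm (g : RR) (a b c d : ℕ) :
    (coeff (ee a b)) (g * mm c d) =
      if c ≤ a ∧ d ≤ b then coeff (ee (a-c) (b-d)) g else 0 := by
  rw [mm, coeff_mul_monomial]
  simp only [ee_le, ee_sub, mul_one]

lemma coeff_mm_mul (g : RR) (a b c d : ℕ) :
    (coeff (ee a b)) (mm c d * g) =
      if c ≤ a ∧ d ≤ b then coeff (ee (a-c) (b-d)) g else 0 := by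
  rw [mm, coeff_monomial_mul]
  simp only [ee_le, ee_sub, one_mul]

lemma coeff_mm (a b c d : ℕ) :
    (coeff (ee a b)) (mm c d) = if c = a ∧ d = b then 1 else 0 := by
  rw [mm, coeff_monomial]
  simp only [ee_inj]
  split_ifs with h1 h2 h2 <;> first | rfl | omega

-- the three generators
def Hg : RR := mm 5 0 + mm 4 1 + mm 0 4
def HXg : RR := (5:ℂ) • mm 4 0 + (4:ℂ) • mm 3 1
def HYg : RR := mm 4 0 + (4:ℂ) • mm 0 3

lemma Hg_eq : Hg = (X 0:RR)^5 + (X 0:RR)^4 * X 1 + (X 1:RR)^4 := by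
  have : (X 1 : RR) = mm 0 1 := by rw [← pow_one (X 1 : RR), X1_pow]
  rw [Hg, X0_pow, X0_pow, X1_pow, this, mm_mul]

lemma HXg_eq : HXg = 5 * (X 0:RR)^4 + 4 * (X 0:RR)^3 * X 1 := by
  have h1 : (X 1 : RR) = mm 0 1 := by rw [← pow_one (X 1 : RR), X1_pow]
  rw [HXg, X0_pow, X0_pow, h1, mul_assoc, mm_mul]
  simp [Algebra.smul_def, map_ofNat]

lemma HYg_eq : HYg = (X 0:RR)^4 + 4 * (X 1:RR)^3 := by
  rw [HYg, X0_pow, X1_pow]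
  simp [Algebra.smul_def, map_ofNat]

def II : Ideal RR := Ideal.span {Hg, HXg, HYg}

lemma combo_mem {z : RR} (a b c : RR) (hz : z = a * Hg + b * HXg + c * HYg) :
    z ∈ II := by
  rw [hz]
  refine add_mem (add_mem ?_ ?_) ?_ <;>
    exact Ideal.mul_mem_left _ _ (Ideal.subset_span (by simp))

lemma unsmul_mem {c : ℂ} (hc : c ≠ 0) {z : RR} (h : c • z ∈ II) : z ∈ II := by
  have h2 := Ideal.mul_mem_left _ (algebraMap ℂ RR c⁻¹) h
  rwa [Algebra.smul_def, ← mul_assoc, ← map_mul, inv_mul_cancel₀ hc, map_one, one_mul] at h2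

lemma smul_mem_II (c : ℂ) {z : RR} (h : z ∈ II) : c • z ∈ II := by
  rw [Algebra.smul_def]; exact Ideal.mul_mem_left _ _ h

lemma mm_X (a b : ℕ) : mm a b = (X 0:RR)^a * (X 1:RR)^b := by
  rw [X0_pow, X1_pow, mm_mul]; norm_num

lemma mem_mm04 : mm 0 4 ∈ II := by
  refine combo_mem 5 (-(X 0)) (-(X 1)) ?_
  rw [Hg_eq, HXg_eq, HYg_eq, mm_X]; ring

lemma mem_F2 : mm 3 1 - (5:ℂ) • mm 0 3 ∈ II := by
  refine unsmul_mem (c := 4) (by norm_num) (combo_mem 0 1 (-5) ?_)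
  rw [smul_sub, smul_smul, Algebra.smul_def, Algebra.smul_def,
    show ((4:ℂ)*5) = 20 by norm_num, map_ofNat, map_ofNat,
    Hg_eq, HXg_eq, HYg_eq, mm_X, mm_X]
  ring

lemma mem_mm13 : mm 1 3 ∈ II := by
  refine unsmul_mem (c := 20) (by norm_num)
    (combo_mem (-80) (15 * X 0) (20 * X 1 + 5 * X 0) ?_)
  rw [Algebra.smul_def, map_ofNat, Hg_eq, HXg_eq, HYg_eq, mm_X]
  ring

lemma mem_mm50 : mm 5 0 ∈ II := by
  refine combo_mem 16 (-(3 * X 0)) (-(4 * X 1)) ?_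
  rw [Hg_eq, HXg_eq, HYg_eq, mm_X]; ring

lemma mem_mm41 : mm 4 1 ∈ II := by
  refine combo_mem (-20) (4 * X 0) (5 * X 1) ?_
  rw [Hg_eq, HXg_eq, HYg_eq, mm_X]; ring

lemma mem_mm32 : mm 3 2 ∈ II := by
  refine unsmul_mem (c := 4) (by norm_num)
    (combo_mem 100 (X 1 - 20 * X 0) (-(25 * X 1)) ?_)
  rw [Algebra.smul_def, map_ofNat, Hg_eq, HXg_eq, HYg_eq, mm_X]
  ring

lemma mem_mm23 : mm 2 3 ∈ II := by
  have : mm 2 3 = mm 1 0 * mm 1 3 := by rw [mm_mul]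
  rw [this]; exact Ideal.mul_mem_left _ _ mem_mm13

lemma mem_mm14 : mm 1 4 ∈ II := by
  have : mm 1 4 = mm 1 0 * mm 0 4 := by rw [mm_mul]
  rw [this]; exact Ideal.mul_mem_left _ _ mem_mm04

lemma mem_mm05 : mm 0 5 ∈ II := by
  have : mm 0 5 = mm 0 1 * mm 0 4 := by rw [mm_mul]
  rw [this]; exact Ideal.mul_mem_left _ _ mem_mm04

lemma mem_HYg : HYg ∈ II := Ideal.subset_span (by simp)

-- the linear functionals giving the normal form
def cc (a b : ℕ) : RR →ₗ[ℂ] ℂ := coeff (ee a b)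

def Nl : Fin 11 → (RR →ₗ[ℂ] ℂ) :=
 ![cc 0 0, cc 1 0, cc 2 0, cc 3 0, cc 0 1, cc 1 1, cc 2 1, cc 0 2, cc 1 2, cc 2 2,
   cc 0 3 - (4:ℂ) • cc 4 0 + (5:ℂ) • cc 3 1]

def MB : Fin 11 → RR :=
 ![mm 0 0, mm 1 0, mm 2 0, mm 3 0, mm 0 1, mm 1 1, mm 2 1, mm 0 2, mm 1 2, mm 2 2, mm 0 3]

lemma Nl_0 : Nl 0 = cc 0 0 := rfl
lemma Nl_1 : Nl 1 = cc 1 0 := rfl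
lemma Nl_2 : Nl 2 = cc 2 0 := rfl
lemma Nl_3 : Nl 3 = cc 3 0 := rfl
lemma Nl_4 : Nl 4 = cc 0 1 := rfl
lemma Nl_5 : Nl 5 = cc 1 1 := rfl
lemma Nl_6 : Nl 6 = cc 2 1 := rfl
lemma Nl_7 : Nl 7 = cc 0 2 := rfl
lemma Nl_8 : Nl 8 = cc 1 2 := rfl
lemma Nl_9 : Nl 9 = cc 2 2 := rfl
lemma Nl_10 : Nl 10 = cc 0 3 - (4:ℂ) • cc 4 0 + (5:ℂ) • cc 3 1 := rfl

lemma kill_H (g : RR) (i : Fin 11) : Nl i (g * Hg) = 0 := by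
  fin_cases i <;>
  simp [Nl_0, Nl_1, Nl_2, Nl_3, Nl_4, Nl_5, Nl_6, Nl_7, Nl_8, Nl_9, Nl_10,
    cc, Hg, mul_add, coeff_mul_mm]

lemma kill_HX (g : RR) (i : Fin 11) : Nl i (g * HXg) = 0 := by
  fin_cases i <;>
  simp [Nl_0, Nl_1, Nl_2, Nl_3, Nl_4, Nl_5, Nl_6, Nl_7, Nl_8, Nl_9, Nl_10,
    cc, HXg, mul_add, mul_smul_comm, coeff_mul_mm] <;> ring

lemma kill_HY (g : RR) (i : Fin 11) : Nl i (g * HYg) = 0 := by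
  fin_cases i <;>
  simp [Nl_0, Nl_1, Nl_2, Nl_3, Nl_4, Nl_5, Nl_6, Nl_7, Nl_8, Nl_9, Nl_10,
    cc, HYg, mul_add, mul_smul_comm, coeff_mul_mm] <;> ring

lemma kill_II {z : RR} (hz : z ∈ II) (i : Fin 11) : Nl i z = 0 := by
  rw [II, show ({Hg, HXg, HYg} : Set RR) = insert Hg (insert HXg {HYg}) from rfl] at hz
  rw [Ideal.mem_span_insert] at hz
  obtain ⟨a, z1, hz1, rfl⟩ := hz
  rw [Ideal.mem_span_insert] at hz1
  obtain ⟨b, z2, hz2, rfl⟩ := hz1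
  rw [Ideal.mem_span_singleton'] at hz2
  obtain ⟨c, rfl⟩ := hz2
  rw [map_add, map_add, kill_H, kill_HX, kill_HY, add_zero, add_zero]

lemma Nl_eval (c : Fin 11 → ℂ) (i : Fin 11) : Nl i (∑ j, c j • MB j) = c i := by
  fin_cases i <;>
  simp [Nl_0, Nl_1, Nl_2, Nl_3, Nl_4, Nl_5, Nl_6, Nl_7, Nl_8, Nl_9, Nl_10,
    cc, MB, Fin.sum_univ_succ, coeff_mm] <;> rfl

-- decomposition of series of order ≥ 5
def u (t : RR) (b : ℕ) : RR :=
  (fun e => if e 1 = 0 then (coeff (ee (e 0 + (5 - b)) b)) t else 0 :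
    ((Fin 2) →₀ ℕ) → ℂ)

def u5 (t : RR) : RR :=
  (fun e => (coeff (ee (e 0) (e 1 + 5))) t : ((Fin 2) →₀ ℕ) → ℂ)

lemma coeff_u (t : RR) (b c d : ℕ) :
    (coeff (ee c d)) (u t b) =
      if d = 0 then (coeff (ee (c + (5 - b)) b)) t else 0 := by
  rw [coeff_apply]
  simp only [u, ee_apply0, ee_apply1]

lemma coeff_u5 (t : RR) (c d : ℕ) :
    (coeff (ee c d)) (u5 t) = (coeff (ee c (d + 5))) t := by
  rw [coeff_apply]
  simp only [u5, ee_apply0, ee_apply1]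

set_option maxHeartbeats 2000000 in
lemma tail_decomp (t : RR) (hlow : ∀ a b : ℕ, a + b < 5 → (coeff (ee a b)) t = 0) :
    t = mm 5 0 * u t 0 + mm 4 1 * u t 1 + mm 3 2 * u t 2 + mm 2 3 * u t 3 +
      mm 1 4 * u t 4 + mm 0 5 * u5 t := by
  ext e
  rw [eq_ee e]
  generalize e 0 = p
  generalize e 1 = q
  rw [map_add, map_add, map_add, map_add, map_add,
    coeff_mm_mul, coeff_mm_mul, coeff_mm_mul, coeff_mm_mul, coeff_mm_mul, coeff_mm_mul,
    coeff_u, coeff_u, coeff_u, coeff_u, coeff_u, coeff_u5]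
  split_ifs <;>
    first
      | (exfalso; omega)
      | (simp only [add_zero, zero_add]; exact hlow _ _ (by omega))
      | (simp only [add_zero, zero_add]; exact coeff_congr (by omega) (by omega) t)

lemma tail_mem (t : RR) (hlow : ∀ a b : ℕ, a + b < 5 → (coeff (ee a b)) t = 0) :
    t ∈ II := by
  rw [tail_decomp t hlow]
  exact add_mem (add_mem (add_mem (add_mem (add_mem
    (Ideal.mul_mem_right _ _ mem_mm50) (Ideal.mul_mem_right _ _ mem_mm41))
    (Ideal.mul_mem_right _ _ mem_mm32)) (Ideal.mul_mem_right _ _ mem_mm23))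
    (Ideal.mul_mem_right _ _ mem_mm14)) (Ideal.mul_mem_right _ _ mem_mm05)

set_option maxHeartbeats 2000000 in
lemma reduce (f : RR) : ∃ c : Fin 11 → ℂ, f - (∑ j, c j • MB j) ∈ II := by
  refine ⟨![cc 0 0 f, cc 1 0 f, cc 2 0 f, cc 3 0 f, cc 0 1 f, cc 1 1 f, cc 2 1 f,
    cc 0 2 f, cc 1 2 f, cc 2 2 f, cc 0 3 f - 4 * cc 4 0 f + 5 * cc 3 1 f], ?_⟩
  have hcorr : (cc 4 0 f) • HYg + (cc 3 1 f) • (mm 3 1 - (5:ℂ) • mm 0 3)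
      + (cc 1 3 f) • mm 1 3 + (cc 0 4 f) • mm 0 4 ∈ II :=
    add_mem (add_mem (add_mem (smul_mem_II _ mem_HYg) (smul_mem_II _ mem_F2))
      (smul_mem_II _ mem_mm13)) (smul_mem_II _ mem_mm04)
  have key : f - (∑ j, (![cc 0 0 f, cc 1 0 f, cc 2 0 f, cc 3 0 f, cc 0 1 f, cc 1 1 f,
        cc 2 1 f, cc 0 2 f, cc 1 2 f, cc 2 2 f,
        cc 0 3 f - 4 * cc 4 0 f + 5 * cc 3 1 f] : Fin 11 → ℂ) j • MB j)
      - ((cc 4 0 f) • HYg + (cc 3 1 f) • (mm 3 1 - (5:ℂ) • mm 0 3)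
        + (cc 1 3 f) • mm 1 3 + (cc 0 4 f) • mm 0 4) ∈ II := by
    refine tail_mem _ ?_
    intro a b hab
    have ha : a ≤ 4 := by omega
    have hb : b ≤ 4 := by omega
    interval_cases a <;> interval_cases b <;>
      first
        | omega
        | (simp [map_sub, map_add, map_smul, map_sum, Fin.sum_univ_succ,
            Fin.sum_univ_zero, MB, HYg, cc, coeff_mm, Matrix.cons_val_zero,
            Matrix.cons_val_one, Matrix.head_cons, Matrix.cons_val_succ,
            smul_eq_mul]
           try ring_nf)
  have h2 := add_mem key hcorr
  rwa [sub_add_cancel] at h2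

def LC : (Fin 11 → ℂ) →ₗ[ℂ] RR where
  toFun c := ∑ j, c j • MB j
  map_add' a b := by
    simp [add_smul, Finset.sum_add_distrib]
  map_smul' r a := by
    simp [smul_smul, Finset.smul_sum]

def qmap : (Fin 11 → ℂ) →ₗ[ℂ] (RR ⧸ II) :=
  (Ideal.Quotient.mkₐ ℂ II).toLinearMap.comp LC

lemma qmap_bij : Function.Bijective qmap := by
  constructor
  · rw [injective_iff_map_eq_zero]
    intro c hc
    have hmem : LC c ∈ II := by
      rwa [qmap, LinearMap.comp_apply, AlgHom.toLinearMap_apply,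
        Ideal.Quotient.mkₐ_eq_mk, Ideal.Quotient.eq_zero_iff_mem] at hc
    funext i
    have h0 := kill_II hmem i
    simp only [LC, LinearMap.coe_mk, AddHom.coe_mk] at h0
    rw [Pi.zero_apply, ← Nl_eval c i, h0]
  · intro q
    obtain ⟨f, rfl⟩ := Ideal.Quotient.mk_surjective q
    obtain ⟨c, hc⟩ := reduce f
    refine ⟨c, ?_⟩
    rw [qmap, LinearMap.comp_apply, AlgHom.toLinearMap_apply, Ideal.Quotient.mkₐ_eq_mk]
    exact (Ideal.Quotient.eq.mpr (by simpa [LC] using neg_mem hc : LC c - f ∈ II))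

lemma main_rank : Module.finrank ℂ (RR ⧸ II) = 11 := by
  rw [← (LinearEquiv.ofBijective qmap qmap_bij).finrank_eq, Module.finrank_fin_fun]

end

end TjurinaAux

theorem stmt5 (x y h hx hy : MvPowerSeries (Fin 2) ℂ)
    (hxd : x = X 0) (hyd : y = X 1)
    (hh : h = x ^ 5 + x ^ 4 * y + y ^ 4)
    (hhx : hx = 5 * x ^ 4 + 4 * x ^ 3 * y) (hhy : hy = x ^ 4 + 4 * y ^ 3) :
    Module.finrank ℂ (MvPowerSeries (Fin 2) ℂ ⧸ Ideal.span {h, hx, hy}) = 11 := by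
  have : ({h, hx, hy} : Set (MvPowerSeries (Fin 2) ℂ)) =
      {TjurinaAux.Hg, TjurinaAux.HXg, TjurinaAux.HYg} := by
    rw [hh, hhx, hhy, hxd, hyd, TjurinaAux.Hg_eq, TjurinaAux.HXg_eq, TjurinaAux.HYg_eq]
  rw [this]
  exact TjurinaAux.main_rank
end

section
/- For f = x^5 + y^4 z + x^4 y, with η = (x^3/y) dx + (1/5)(x^3/y) dy, the 2-form ξ = df ∧ η has polynomial coefficients, and dξ = -df ∧ dη = c1 x^3 y^2 dx∧dy∧dz + c2 x^2 y^3 dx∧dy∧dz for some nonzero constants c1, c2. Concretely: f_y ∂_z(x^3/y) - f_z ∂_y(x^3/y) = x^3 y^2 and f_x ∂_z(x^3/(5y)) - f_z ∂_x(x^3/(5y)) = -(3/5) x^2 y^3. -/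
lemma aux_const (c z : ℂ) : deriv (fun _ : ℂ => c) z = 0 := deriv_const _ _

lemma aux_inv (x y : ℂ) (hy : y ≠ 0) :
    deriv (fun y' : ℂ => x ^ 3 / y') y = -(x ^ 3 / y ^ 2) := by
  have : deriv (fun y' : ℂ => x ^ 3 / y') y = x ^ 3 * deriv (fun y' : ℂ => y'⁻¹) y := by
    simp only [div_eq_mul_inv]
    rw [deriv_const_mul _ (differentiableAt_inv hy)]
  rw [this, deriv_inv]
  field_simp

lemma aux_cube (x y : ℂ) :
    deriv (fun x' : ℂ => (1 / 5 : ℂ) * x' ^ 3 / y) x = (3 / 5) * x ^ 2 / y := by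
  have : (fun x' : ℂ => (1 / 5 : ℂ) * x' ^ 3 / y) = fun x' : ℂ => ((1 / 5 : ℂ) / y) * x' ^ 3 := by
    funext x'; ring
  rw [this, deriv_const_mul _ (by fun_prop), deriv_pow_field]
  ring

/-- For `f = x^5 + y^4 z + x^4 y`, with `η = (x^3/y) dx + (1/5)(x^3/y) dy`, the 2-form
`ξ = df ∧ η` has polynomial coefficients (its `dx∧dy`, `dx∧dz`, `dy∧dz` components are given
by polynomials), and the two derivative identities computing `dξ = -df ∧ dη` hold, so that
`dξ = c₁ x^3 y^2 dx∧dy∧dz + c₂ x^2 y^3 dx∧dy∧dz` with `c₁, c₂ ≠ 0`. -/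
theorem stmt11 :
    (∃ P Q R : MvPolynomial (Fin 3) ℂ, ∀ x y z : ℂ, y ≠ 0 →
      -- fx = 5x^4+4x^3y, fy = x^4+4y^3z, fz = y^4, g1 = x^3/y, g2 = (1/5)x^3/y
      ((5 * x ^ 4 + 4 * x ^ 3 * y) * ((1 / 5) * x ^ 3 / y)
          - (x ^ 4 + 4 * y ^ 3 * z) * (x ^ 3 / y)
          = MvPolynomial.eval (fun i => ![x, y, z] i) P) ∧
      (- (y ^ 4) * (x ^ 3 / y) = MvPolynomial.eval (fun i => ![x, y, z] i) Q) ∧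
      (- (y ^ 4) * ((1 / 5) * x ^ 3 / y) = MvPolynomial.eval (fun i => ![x, y, z] i) R)) ∧
    (∀ x y z : ℂ, y ≠ 0 →
      (x ^ 4 + 4 * y ^ 3 * z) * deriv (fun _ : ℂ => x ^ 3 / y) z
          - y ^ 4 * deriv (fun y' : ℂ => x ^ 3 / y') y = x ^ 3 * y ^ 2) ∧
    (∀ x y z : ℂ, y ≠ 0 →
      (5 * x ^ 4 + 4 * x ^ 3 * y) * deriv (fun _ : ℂ => (1 / 5) * x ^ 3 / y) z
          - y ^ 4 * deriv (fun x' : ℂ => (1 / 5) * x' ^ 3 / y) x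
          = -(3 / 5) * x ^ 2 * y ^ 3) ∧
    (∃ c1 c2 : ℂ, c1 ≠ 0 ∧ c2 ≠ 0 ∧ ∀ x y z : ℂ, y ≠ 0 →
      ((x ^ 4 + 4 * y ^ 3 * z) * deriv (fun _ : ℂ => x ^ 3 / y) z
          - y ^ 4 * deriv (fun y' : ℂ => x ^ 3 / y') y)
        + ((5 * x ^ 4 + 4 * x ^ 3 * y) * deriv (fun _ : ℂ => (1 / 5) * x ^ 3 / y) z
          - y ^ 4 * deriv (fun x' : ℂ => (1 / 5) * x' ^ 3 / y) x)
        = c1 * (x ^ 3 * y ^ 2) + c2 * (x ^ 2 * y ^ 3)) := by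
  refine ⟨⟨MvPolynomial.C (4/5) * MvPolynomial.X 0 ^ 6
      - MvPolynomial.C 4 * MvPolynomial.X 0 ^ 3 * MvPolynomial.X 1 ^ 2 * MvPolynomial.X 2,
    - (MvPolynomial.X 0 ^ 3 * MvPolynomial.X 1 ^ 3),
    - (MvPolynomial.C (1/5) * MvPolynomial.X 0 ^ 3 * MvPolynomial.X 1 ^ 3),
    fun x y z hy => ?_⟩, fun x y z hy => ?_, fun x y z hy => ?_,
    1, -(3/5), one_ne_zero, by norm_num, fun x y z hy => ?_⟩
  · simp only [MvPolynomial.eval_sub, MvPolynomial.eval_neg, MvPolynomial.eval_mul,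
      MvPolynomial.eval_pow, MvPolynomial.eval_C, MvPolynomial.eval_X]
    simp only [Matrix.cons_val_zero, Matrix.cons_val_one, Matrix.head_cons,
      Matrix.cons_val_two, Matrix.tail_cons]
    refine ⟨?_, ?_, ?_⟩ <;> field_simp <;> ring
  · rw [aux_const, aux_inv x y hy]; field_simp; ring
  · rw [aux_const, aux_cube]; field_simp; ring
  · rw [aux_const, aux_const, aux_inv x y hy, aux_cube]; field_simp; ring
end
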